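/- Let n ≥ 1, let X₁,…,X_n be sets, and let k : ∏_{i=1}^n Xᵢ → ℝⁿ. Under the canonical bijection Σ(⊙_{i=1}^n D^Δ_{X₁,…,Xᵢ}) ≅ ∏_{i=1}^n (∏_{j<i} Xⱼ → Xᵢ), a strategy profile σ is a state of the iterated composite ⊙_{i=1}^n D^Δ_{X₁,…,Xᵢ} : I ⇸ (∏ᵢ Xᵢ, ℝⁿ) over k if and only if σ is a pure Nash equilibrium of the n-player sequential game with payoff function k, i.e., iff for every 1 ≤ i ≤ n and every xᵢ ∈ Xᵢ, k(v^σ)ᵢ ≥ k(v^σ_{(v^σ)₁,…,(v^σ)_{i-1}, xᵢ})ᵢ. -/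

import Mathlib

/-- A lens between 'disets' `(X, S)` and `(Y, R)`: a view function `X → Y` and
an update function `X × R → S`. -/
structure Lens (X S Y R : Type) where
  v : X → Y
  u : X → R → S

namespace Lens

/-- The identity lens on the diset `(X, S)`. -/
def id (X S : Type) : Lens X S X S := ⟨fun x => x, fun _ s => s⟩

/-- Composition of lenses: `m.comp l` is "first `l`, then `m`". -/
def comp {X S Y R Z Q : Type} (m : Lens Y R Z Q) (l : Lens X S Y R) : Lens X S Z Q :=
  ⟨fun x => m.v (l.v x), fun x q => l.u x (m.u (l.v x) q)⟩

theorem comp_assoc {X S Y R Z Q W T : Type} (c : Lens Z Q W T) (b : Lens Y R Z Q)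
    (a : Lens X S Y R) : (c.comp b).comp a = c.comp (b.comp a) := rfl

/-- The action of the continuation functor `K` on a lens. -/
def K {X S Y R : Type} (l : Lens X S Y R) (k : Y → R) : X → S :=
  fun x => l.u x (k (l.v x))

theorem K_comp {X S Y R Z Q : Type} (m : Lens Y R Z Q) (l : Lens X S Y R) (k : Z → Q) :
    (m.comp l).K k = l.K (m.K k) := rfl

/-- The tensor (monoidal product) of lenses. -/
def tensor {X S Y R X' S' Y' R' : Type} (l : Lens X S Y R) (l' : Lens X' S' Y' R') :
    Lens (X × X') (S × S') (Y × Y') (R × R') :=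
  ⟨fun p => (l.v p.1, l'.v p.2), fun p r => (l.u p.1 r.1, l'.u p.2 r.2)⟩

end Lens

/-- An open game `G : (X,S) ⇸ (Y,R)`: a set of strategy profiles, a lens for each
strategy profile, and a best-response relation for each context `(h, k)`. -/
structure OpenGame (X S Y R : Type) where
  Strat : Type
  play : Strat → Lens X S Y R
  B : X → (Y → R) → Strat → Strat → Prop

namespace OpenGame

/-- A state of an open game over a continuation `k`: a strategy profile `σ` with
`(σ,σ) ∈ B(h,k)` for every history `h`. -/
def IsState {X S Y R : Type} (G : OpenGame X S Y R) (σ : G.Strat) (k : Y → R) : Prop :=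
  ∀ h : X, G.B h k σ σ

/-- Sequential composition `H ⊙ G` of open games. -/
def seq {X S Y R Z Q : Type} (G : OpenGame X S Y R) (H : OpenGame Y R Z Q) :
    OpenGame X S Z Q where
  Strat := G.Strat × H.Strat
  play := fun p => (H.play p.2).comp (G.play p.1)
  B := fun h k p p' =>
    G.B h ((H.play p.2).K k) p.1 p'.1 ∧ H.B ((G.play p.1).v h) k p.2 p'.2

/-- Tensor (simultaneous play) `G₁ ⊗ G₂` of open games. -/
def tensor {X₁ S₁ Y₁ R₁ X₂ S₂ Y₂ R₂ : Type}
    (G₁ : OpenGame X₁ S₁ Y₁ R₁) (G₂ : OpenGame X₂ S₂ Y₂ R₂) :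
    OpenGame (X₁ × X₂) (S₁ × S₂) (Y₁ × Y₂) (R₁ × R₂) where
  Strat := G₁.Strat × G₂.Strat
  play := fun p => (G₁.play p.1).tensor (G₂.play p.2)
  B := fun h k p p' =>
    G₁.B h.1 (fun y => (k (y, (G₂.play p.2).v h.2)).1) p.1 p'.1 ∧
    G₂.B h.2 (fun y' => (k ((G₁.play p.1).v h.1, y')).2) p.2 p'.2

end OpenGame

/-- A (contravariant lens) morphism of open games `α : G → G'`: lenses
`s(α) : Φ' → Φ` and `t(α) : Ψ' → Ψ` and a map on strategy profiles, such that plays are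
intertwined and best responses are preserved. -/
structure OGMor {X S Y R X' S' Y' R' : Type}
    (G : OpenGame X S Y R) (G' : OpenGame X' S' Y' R') where
  s : Lens X' S' X S
  t : Lens Y' R' Y R
  f : G.Strat → G'.Strat
  comm : ∀ σ, (G.play σ).comp s = t.comp (G'.play (f σ))
  best : ∀ h k σ σ', G.B (s.v h) k σ σ' → G'.B h (t.K k) (f σ) (f σ')

/-- Vertical composition of morphisms of open games. -/
def OGMor.vcomp {X S Y R X' S' Y' R' X'' S'' Y'' R'' : Type}
    {G : OpenGame X S Y R} {G' : OpenGame X' S' Y' R'} {G'' : OpenGame X'' S'' Y'' R''}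
    (β : OGMor G' G'') (α : OGMor G G') : OGMor G G'' where
  s := α.s.comp β.s
  t := α.t.comp β.t
  f := β.f ∘ α.f
  comm := by
    intro σ
    show _ = (α.t.comp β.t).comp (G''.play (β.f (α.f σ)))
    rw [← Lens.comp_assoc, α.comm, Lens.comp_assoc, β.comm, ← Lens.comp_assoc]
  best := by
    intro h k σ σ' hB
    exact β.best h (α.t.K k) _ _ (α.best (β.s.v h) k σ σ' hB)

/-- Strategy profiles of an `n`-player sequential game with choice sets `X i`:
for each `i`, a function `∏_{j<i} X j → X i`. -/
def SeqStrat (n : ℕ) (X : Fin n → Type) : Type :=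
  ∀ i : Fin n, ((∀ j : Fin i.val, X (Fin.castLT j (j.isLt.trans i.isLt))) → X i)

/-- The strategic extension `v^σ` (auxiliary version, by course-of-values recursion). -/
def extendAux {n : ℕ} {X : Fin n → Type} (σ : SeqStrat n X) :
    (m : ℕ) → (h : m < n) → X ⟨m, h⟩
  | m, h => σ ⟨m, h⟩ (fun j => extendAux σ j.val (j.isLt.trans h))
  termination_by m _ => m

/-- The strategic extension `v^σ` of the empty play: the play in which every player `i`
follows the strategy `σ i`. -/
def extendPlay {n : ℕ} {X : Fin n → Type} (σ : SeqStrat n X) : ∀ i : Fin n, X i :=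
  fun i => extendAux σ i.val i.isLt

/-- The strategic extension `v^σ_{x, xi}` of the partial play `(x, xi)`, where `x` is a
partial play of length `i` and `xi` is the move played at position `i`; all later moves
follow `σ` (auxiliary version). -/
def deviateAux {n : ℕ} {X : Fin n → Type} (σ : SeqStrat n X) (i : Fin n)
    (x : ∀ j : Fin i.val, X (Fin.castLT j (j.isLt.trans i.isLt))) (xi : X i) :
    (m : ℕ) → (h : m < n) → X ⟨m, h⟩
  | m, h =>
    if hm : m < i.val then x ⟨m, hm⟩
    else if hm' : m = i.val then
      cast (congrArg X (show i = (⟨m, h⟩ : Fin n) from Fin.ext hm'.symm)) xi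
    else σ ⟨m, h⟩ (fun j => deviateAux σ i x xi j.val (j.isLt.trans h))
  termination_by m _ => m

/-- The strategic extension `v^σ_{x, xi}`. -/
def deviatePlay {n : ℕ} {X : Fin n → Type} (σ : SeqStrat n X) (i : Fin n)
    (x : ∀ j : Fin i.val, X (Fin.castLT j (j.isLt.trans i.isLt))) (xi : X i) :
    ∀ l : Fin n, X l :=
  fun l => deviateAux σ i x xi l.val l.isLt

/-- The open game `D^Δ_{X₁,…,X_{n+1}} : (∏_{i≤n} X i, ℝⁿ) ⇸ (∏_{i≤n+1} X i, ℝ^{n+1})`: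
the decision of player `n+1`, who observes the previous `n` moves, copies them forward,
and maximises the `(n+1)`-st payoff. -/
def DDelta (n : ℕ) (X : Fin (n + 1) → Type) :
    OpenGame (∀ i : Fin n, X i.castSucc) (Fin n → ℝ)
      (∀ i : Fin (n + 1), X i) (Fin (n + 1) → ℝ) where
  Strat := (∀ i : Fin n, X i.castSucc) → X (Fin.last n)
  play := fun σ => ⟨fun x => Fin.snoc x (σ x), fun _ r => fun i => r i.castSucc⟩
  B := fun h k _ σ'' => ∀ xn : X (Fin.last n),
    k (Fin.snoc h (σ'' h)) (Fin.last n) ≥ k (Fin.snoc h xn) (Fin.last n)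

/-- The canonical bijection between strategy profiles of
`(⊙_{i=1}^n D^Δ) ⊙ D^Δ_{X₁,…,X_{n+1}}` and sequential strategy profiles. -/
def snocStratEquiv {n : ℕ} (X : Fin (n + 1) → Type) :
    (SeqStrat n (fun i => X i.castSucc) ×
      ((∀ i : Fin n, X i.castSucc) → X (Fin.last n))) ≃ SeqStrat (n + 1) X where
  toFun p i :=
    Fin.lastCases
      (motive := fun i => (∀ j : Fin i.val, X (Fin.castLT j (j.isLt.trans i.isLt))) → X i)
      p.2 p.1 i
  invFun σ := (fun j => σ j.castSucc, σ (Fin.last n))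
  left_inv p := by
    obtain ⟨a, b⟩ := p
    refine Prod.ext ?_ ?_
    · funext j
      exact Fin.lastCases_castSucc (motive := fun i => (∀ j : Fin i.val, X (Fin.castLT j (j.isLt.trans i.isLt))) → X i) (last := b) (cast := a) j
    · exact Fin.lastCases_last (motive := fun i => (∀ j : Fin i.val, X (Fin.castLT j (j.isLt.trans i.isLt))) → X i) (last := b) (cast := a)
  right_inv σ := by
    funext i
    induction i using Fin.lastCases with
    | last => simp
    | cast j => simp

/-- The iterated sequential composite `⊙_{i=1}^n D^Δ_{X₁,…,X_i} : I ⇸ (∏ i, X i, ℝⁿ)`,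
built by recursion using the sequential composition `⊙` of open games, together with the
canonical bijection of its strategy profiles with `∏_{i=1}^n (∏_{j<i} X j → X i)`. -/
def seqAux : (n : ℕ) → (X : Fin n → Type) →
    (G : OpenGame PUnit PUnit (∀ i, X i) (Fin n → ℝ)) ×' (G.Strat ≃ SeqStrat n X)
  | 0, X =>
    ⟨{ Strat := PUnit
       play := fun _ => ⟨fun _ => (fun i => i.elim0), fun _ _ => PUnit.unit⟩
       B := fun _ _ _ _ => True },
     (Equiv.ofUnique PUnit (∀ i : Fin 0, ((∀ j : Fin i.val, X (Fin.castLT j (j.isLt.trans i.isLt))) → X i)) : PUnit ≃ SeqStrat 0 X)⟩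
  | n + 1, X =>
    let p := seqAux n (fun i => X i.castSucc)
    ⟨p.1.seq (DDelta n X),
     (p.2.prodCongr (Equiv.refl _)).trans (snocStratEquiv X)⟩

theorem extendAux_castSucc {n : ℕ} {X : Fin (n+1) → Type} (σ : SeqStrat (n+1) X)
    (m : ℕ) (h : m < n) :
    extendAux (X := fun i => X i.castSucc) (fun j => σ j.castSucc) m h
      = extendAux σ m (h.trans n.lt_succ_self) := by
  induction m using Nat.strong_induction_on with
  | _ m IH =>
    refine (extendAux.eq_1 (X := fun i => X i.castSucc) (fun j => σ j.castSucc) m h).trans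
      (Eq.trans ?_ (extendAux.eq_1 σ m (h.trans n.lt_succ_self)).symm)
    show σ ⟨m, h.trans n.lt_succ_self⟩ _ = σ ⟨m, h.trans n.lt_succ_self⟩ _
    refine congrArg _ (funext fun j => ?_)
    exact IH j.val j.isLt (j.isLt.trans h)

theorem deviateAux_castSucc {n : ℕ} {X : Fin (n+1) → Type} (σ : SeqStrat (n+1) X)
    (i : Fin n)
    (x : ∀ j : Fin i.val, (fun l : Fin n => X l.castSucc) (Fin.castLT j (j.isLt.trans i.isLt)))
    (xi : X i.castSucc)
    (m : ℕ) (h : m < n) :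
    deviateAux (X := fun l => X l.castSucc) (fun j => σ j.castSucc) i x xi m h
      = deviateAux σ i.castSucc x xi m (h.trans n.lt_succ_self) := by
  induction m using Nat.strong_induction_on with
  | _ m IH =>
    refine (deviateAux.eq_1 (X := fun l => X l.castSucc) (fun j => σ j.castSucc) i x xi m h).trans
      (Eq.trans ?_ (deviateAux.eq_1 σ i.castSucc x xi m (h.trans n.lt_succ_self)).symm)
    by_cases hm : m < i.val
    · simp [hm, Fin.coe_castSucc]
    · by_cases hm' : m = i.val
      · simp [hm, hm', Fin.coe_castSucc]
      · simp only [hm, hm', Fin.coe_castSucc, dif_neg, dite_false]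
        show σ ⟨m, h.trans n.lt_succ_self⟩ _ = σ ⟨m, h.trans n.lt_succ_self⟩ _
        refine congrArg _ (funext fun j => ?_)
        exact IH j.val j.isLt (j.isLt.trans h)

theorem extendPlay_eq_snoc {n : ℕ} {X : Fin (n+1) → Type} (σ : SeqStrat (n+1) X) :
    extendPlay σ = Fin.snoc (extendPlay (fun j => σ j.castSucc))
      (σ (Fin.last n) (extendPlay (fun j => σ j.castSucc))) := by
  funext l
  induction l using Fin.lastCases with
  | last =>
    rw [Fin.snoc_last]
    show extendAux σ n n.lt_succ_self = _
    rw [extendAux]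
    show σ (Fin.last n) _ = σ (Fin.last n) _
    refine congrArg _ (funext fun j => ?_)
    exact (extendAux_castSucc σ j.val j.isLt).symm
  | cast j =>
    rw [Fin.snoc_castSucc]
    exact (extendAux_castSucc σ j.val j.isLt).symm

theorem deviatePlay_castSucc_eq_snoc {n : ℕ} {X : Fin (n+1) → Type} (σ : SeqStrat (n+1) X)
    (i : Fin n)
    (x : ∀ j : Fin i.val, (fun l : Fin n => X l.castSucc) (Fin.castLT j (j.isLt.trans i.isLt)))
    (xi : X i.castSucc) :
    deviatePlay σ i.castSucc x xi
      = Fin.snoc (deviatePlay (fun j => σ j.castSucc) i x xi)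
          (σ (Fin.last n) (deviatePlay (fun j => σ j.castSucc) i x xi)) := by
  funext l
  induction l using Fin.lastCases with
  | last =>
    rw [Fin.snoc_last]
    show deviateAux σ i.castSucc x xi n n.lt_succ_self = _
    rw [deviateAux, dif_neg (show ¬ n < (Fin.castSucc i).val by have := i.isLt; simp only [Fin.coe_castSucc]; omega),
      dif_neg (show ¬ n = (Fin.castSucc i).val by have := i.isLt; simp only [Fin.coe_castSucc]; omega)]
    show σ (Fin.last n) _ = σ (Fin.last n) _
    refine congrArg _ (funext fun j => ?_)
    exact (deviateAux_castSucc σ i x xi j.val j.isLt).symm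
  | cast j =>
    rw [Fin.snoc_castSucc]
    exact (deviateAux_castSucc σ i x xi j.val j.isLt).symm

theorem deviatePlay_last_eq_snoc {n : ℕ} {X : Fin (n+1) → Type} (σ : SeqStrat (n+1) X)
    (x : ∀ j : Fin (Fin.last n).val, X (Fin.castLT j (j.isLt.trans (Fin.last n).isLt)))
    (xn : X (Fin.last n)) :
    deviatePlay σ (Fin.last n) x xn = Fin.snoc (fun j : Fin n => x j) xn := by
  funext l
  induction l using Fin.lastCases with
  | last =>
    rw [Fin.snoc_last]
    show deviateAux σ (Fin.last n) x xn n n.lt_succ_self = xn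
    rw [deviateAux, dif_neg (show ¬ n < (Fin.last n).val from lt_irrefl n),
      dif_pos (show n = (Fin.last n).val from rfl)]
    exact eq_of_heq (cast_heq _ _)
  | cast j =>
    rw [Fin.snoc_castSucc]
    show deviateAux σ (Fin.last n) x xn j.val (j.isLt.trans n.lt_succ_self) = x j
    rw [deviateAux, dif_pos (show j.val < (Fin.last n).val from j.isLt)]
    rfl

theorem seqAux_play_view : ∀ (n : ℕ) (X : Fin n → Type) (σ : SeqStrat n X) (h : PUnit),
    ((seqAux n X).1.play ((seqAux n X).2.symm σ)).v h = extendPlay σ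
  | 0, X, σ, h => funext fun i => i.elim0
  | n + 1, X, σ, h => by
    show Fin.snoc _ _ = _
    have h1 : ((seqAux (n+1) X).2.symm σ).1
        = (seqAux n (fun i => X i.castSucc)).2.symm (fun j => σ j.castSucc) := rfl
    have h2 : ((seqAux (n+1) X).2.symm σ).2 = σ (Fin.last n) := rfl
    rw [h1, h2, seqAux_play_view n (fun i => X i.castSucc) (fun j => σ j.castSucc) h,
      extendPlay_eq_snoc]
    rfl

theorem deviatePlay_last_extend {n : ℕ} {X : Fin (n+1) → Type} (σ : SeqStrat (n+1) X)
    (xn : X (Fin.last n)) :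
    deviatePlay σ (Fin.last n)
        (fun j => extendPlay σ (Fin.castLT j (j.isLt.trans (Fin.last n).isLt))) xn
      = Fin.snoc (extendPlay (fun m => σ m.castSucc)) xn := by
  funext l
  induction l using Fin.lastCases with
  | last =>
    rw [Fin.snoc_last]
    show deviateAux σ (Fin.last n) _ xn n n.lt_succ_self = xn
    rw [deviateAux, dif_neg (show ¬ n < (Fin.last n).val from lt_irrefl n),
      dif_pos (show n = (Fin.last n).val from rfl)]
    exact eq_of_heq (cast_heq _ _)
  | cast j =>
    rw [Fin.snoc_castSucc]
    show deviateAux σ (Fin.last n) _ xn j.val (j.isLt.trans n.lt_succ_self) = _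
    rw [deviateAux, dif_pos (show j.val < (Fin.last n).val from j.isLt)]
    exact (extendAux_castSucc σ j.val j.isLt).symm

theorem deviatePlay_castSucc_extend {n : ℕ} {X : Fin (n+1) → Type} (σ : SeqStrat (n+1) X)
    (j : Fin n) (xi : X j.castSucc) :
    deviatePlay σ j.castSucc
        (fun l => extendPlay σ (Fin.castLT l (l.isLt.trans j.castSucc.isLt))) xi
      = Fin.snoc
          (deviatePlay (fun m => σ m.castSucc) j
            (fun l => extendPlay (X := fun l : Fin n => X l.castSucc) (fun m => σ m.castSucc)
              (Fin.castLT l (l.isLt.trans j.isLt))) xi)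
          (σ (Fin.last n)
            (deviatePlay (fun m => σ m.castSucc) j
              (fun l => extendPlay (X := fun l : Fin n => X l.castSucc) (fun m => σ m.castSucc)
                (Fin.castLT l (l.isLt.trans j.isLt))) xi)) := by
  have harg : (fun l : Fin j.val => extendPlay (X := fun l : Fin n => X l.castSucc) (fun m => σ m.castSucc)
        (Fin.castLT l (l.isLt.trans j.isLt)))
      = (fun l : Fin (Fin.castSucc j).val =>
          extendPlay σ (Fin.castLT l (l.isLt.trans (Fin.castSucc j).isLt))) :=
    funext fun l => extendAux_castSucc σ l.val (l.isLt.trans j.isLt)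
  rw [← harg]
  exact deviatePlay_castSucc_eq_snoc σ j _ xi

theorem seqAux_isState_iff : ∀ (n : ℕ) (X : Fin n → Type)
    (k : (∀ i, X i) → (Fin n → ℝ)) (σ : SeqStrat n X),
    (seqAux n X).1.IsState ((seqAux n X).2.symm σ) k ↔
      ∀ (i : Fin n) (xi : X i),
        k (extendPlay σ) i ≥
          k (deviatePlay σ i (fun j => extendPlay σ (Fin.castLT j (j.isLt.trans i.isLt))) xi) i
  | 0, X, k, σ => by
    constructor
    · intro _ i; exact i.elim0
    · intro _ h; trivial
  | n + 1, X, k, σ => by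
    have IH := seqAux_isState_iff n (fun i => X i.castSucc)
      (fun y i => k (Fin.snoc y (σ (Fin.last n) y)) i.castSucc) (fun m => σ m.castSucc)
    have hview : ((seqAux n (fun i => X i.castSucc)).1.play
        ((seqAux n (fun i => X i.castSucc)).2.symm (fun m => σ m.castSucc))).v PUnit.unit
        = extendPlay (fun m => σ m.castSucc) := seqAux_play_view n _ _ PUnit.unit
    constructor
    · intro hst
      have hA : (seqAux n (fun i => X i.castSucc)).1.IsState
          ((seqAux n (fun i => X i.castSucc)).2.symm (fun m => σ m.castSucc))
          (fun y i => k (Fin.snoc y (σ (Fin.last n) y)) i.castSucc) :=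
        fun h => (hst h).1
      have hC : ∀ xn : X (Fin.last n),
          k (Fin.snoc (((seqAux n (fun i => X i.castSucc)).1.play
              ((seqAux n (fun i => X i.castSucc)).2.symm (fun m => σ m.castSucc))).v PUnit.unit)
            (σ (Fin.last n) (((seqAux n (fun i => X i.castSucc)).1.play
              ((seqAux n (fun i => X i.castSucc)).2.symm (fun m => σ m.castSucc))).v PUnit.unit)))
            (Fin.last n)
          ≥ k (Fin.snoc (((seqAux n (fun i => X i.castSucc)).1.play
              ((seqAux n (fun i => X i.castSucc)).2.symm (fun m => σ m.castSucc))).v PUnit.unit)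
            xn) (Fin.last n) := (hst PUnit.unit).2
      rw [hview] at hC
      simp only [Fin.forall_fin_succ']
      constructor
      · intro j xi
        rw [deviatePlay_castSucc_extend σ j xi, extendPlay_eq_snoc σ]
        exact IH.mp hA j xi
      · intro xi
        rw [deviatePlay_last_extend σ xi, extendPlay_eq_snoc σ]
        exact hC xi
    · intro H h
      have W : ∀ (j : Fin n) (xi : X j.castSucc),
          (fun y i => k (Fin.snoc y (σ (Fin.last n) y)) i.castSucc)
            (extendPlay (fun m => σ m.castSucc)) j
          ≥ (fun y i => k (Fin.snoc y (σ (Fin.last n) y)) i.castSucc)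
            (deviatePlay (fun m => σ m.castSucc) j
              (fun l => extendPlay (X := fun l : Fin n => X l.castSucc) (fun m => σ m.castSucc)
                (Fin.castLT l (l.isLt.trans j.isLt))) xi) j := by
        intro j xi
        have H3 := H j.castSucc xi
        rw [deviatePlay_castSucc_extend σ j xi, extendPlay_eq_snoc σ] at H3
        exact H3
      have hC' : ∀ xn : X (Fin.last n),
          k (Fin.snoc (extendPlay (fun m => σ m.castSucc))
            (σ (Fin.last n) (extendPlay (fun m => σ m.castSucc)))) (Fin.last n)
          ≥ k (Fin.snoc (extendPlay (fun m => σ m.castSucc)) xn) (Fin.last n) := by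
        intro xn
        have H4 := H (Fin.last n) xn
        rw [deviatePlay_last_extend σ xn, extendPlay_eq_snoc σ] at H4
        exact H4
      have hC2 : ∀ xn : X (Fin.last n),
          k (Fin.snoc (((seqAux n (fun i => X i.castSucc)).1.play
              ((seqAux n (fun i => X i.castSucc)).2.symm (fun m => σ m.castSucc))).v PUnit.unit)
            (σ (Fin.last n) (((seqAux n (fun i => X i.castSucc)).1.play
              ((seqAux n (fun i => X i.castSucc)).2.symm (fun m => σ m.castSucc))).v PUnit.unit)))
            (Fin.last n)
          ≥ k (Fin.snoc (((seqAux n (fun i => X i.castSucc)).1.play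
              ((seqAux n (fun i => X i.castSucc)).2.symm (fun m => σ m.castSucc))).v PUnit.unit)
            xn) (Fin.last n) := by
        rw [hview]; exact hC'
      exact ⟨IH.mpr W h, hC2⟩

/-- Let `n ≥ 1`, let `X₁,…,X_n` be sets and `k : ∏ i, X i → ℝⁿ`. Under the canonical
bijection of strategy profiles, `σ` is a state of the iterated composite
`⊙_{i=1}^n D^Δ_{X₁,…,X_i} : I ⇸ (∏ i, X i, ℝⁿ)` over `k` if and only if `σ` is a pure
Nash equilibrium of the `n`-player sequential game with payoff function `k`: for every
player `i` and deviation `x_i`, `k(v^σ)_i ≥ k(v^σ_{(v^σ)_1,…,(v^σ)_{i-1}, x_i})_i`. -/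
theorem states_of_seq_composite_are_nash_equilibria
    (n : ℕ) (hn : 1 ≤ n) (X : Fin n → Type)
    (k : (∀ i, X i) → (Fin n → ℝ)) (σ : SeqStrat n X) :
    (seqAux n X).1.IsState ((seqAux n X).2.symm σ) k ↔
      ∀ (i : Fin n) (xi : X i),
        k (extendPlay σ) i ≥
          k (deviatePlay σ i (fun j => extendPlay σ (Fin.castLT j (j.isLt.trans i.isLt))) xi) i := by
  exact seqAux_isState_iff n X k σ
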